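/- Let G be a finite vertex-transitive simple graph in which all maximal cliques have the same cardinality and which satisfies the uniform clique-extension property. Let ζ : ℕ → ℝ be arbitrary and define, for each subset S of the vertex set, q(S) = ∏_{C maximal clique of G} ζ(|C ∩ S|). Then q(S) = q(T) whenever the induced subgraphs G[S] and G[T] are isomorphic. (Interpretation: channel-state probabilities given by a symmetric Markov random field on G satisfy the isomorphism-invariance assumption.) -/

import Mathlib

/-- `C` is a clique of the simple graph `G`. -/
def IsCliqueF {V : Type*} (G : SimpleGraph V) (C : Finset V) : Prop :=
  ∀ a ∈ C, ∀ b ∈ C, a ≠ b → G.Adj a b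

/-- `C` is a maximal clique of `G`. -/
def IsMaxCliqueF {V : Type*} [DecidableEq V] (G : SimpleGraph V) (C : Finset V) : Prop :=
  IsCliqueF G C ∧ ∀ v, v ∉ C → ¬ IsCliqueF G (insert v C)

/-- `G` satisfies the uniform clique-extension property: for every `j ≥ 1` there is an
integer `r_j` such that every clique with exactly `j` vertices is contained in exactly
`r_j` maximal cliques. -/
def UniformCliqueExtension {V : Type*} [Fintype V] [DecidableEq V] (G : SimpleGraph V) : Prop :=
  ∀ j : ℕ, 1 ≤ j → ∃ r : ℕ, ∀ C : Finset V, IsCliqueF G C → C.card = j →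
    {D : Finset V | IsMaxCliqueF G D ∧ C ⊆ D}.ncard = r


private lemma count_via_ite (M : Multiset ℕ) (m : ℕ) :
    (M.map (fun x => if x = m then 1 else 0)).sum = M.count m := by
  induction M using Multiset.induction_on with
  | empty => simp
  | cons a s ih =>
    simp only [Multiset.map_cons, Multiset.sum_cons, Multiset.count_cons, ih]
    split_ifs <;> omega

private lemma moments_eq : ∀ (n : ℕ) (M N : Multiset ℕ), M.card = n →
    (∀ j, (M.map (fun x => x.choose j)).sum = (N.map (fun x => x.choose j)).sum) →
    M = N := by
  intro n
  induction n with
  | zero =>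
    intro M N hc h
    have hM : M = 0 := Multiset.card_eq_zero.mp hc
    subst hM
    have h0 := h 0
    simp [Nat.choose_zero_right] at h0
    exact (Multiset.card_eq_zero.mp h0.symm).symm
  | succ n ih =>
    intro M N hc h
    have hM0 : M ≠ 0 := by intro h0; simp [h0] at hc
    have hFne : M.toFinset.Nonempty := by
      rwa [Multiset.toFinset_nonempty]
      -- may need : M ≠ 0
    set m := M.toFinset.max' hFne with hm
    have hmM : m ∈ M := Multiset.mem_toFinset.mp (M.toFinset.max'_mem hFne)
    have hmax : ∀ x ∈ M, x ≤ m :=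
      fun x hx => M.toFinset.le_max' x (Multiset.mem_toFinset.mpr hx)
    have hNle : ∀ y ∈ N, y ≤ m := by
      intro y hy
      by_contra hlt
      push_neg at hlt
      have h1 := h y
      have hL : (M.map (fun x => x.choose y)).sum = 0 := by
        rw [Multiset.sum_eq_zero]
        intro z hz
        obtain ⟨x, hx, rfl⟩ := Multiset.mem_map.mp hz
        exact Nat.choose_eq_zero_of_lt (lt_of_le_of_lt (hmax x hx) hlt)
      have hR : 1 ≤ (N.map (fun x => x.choose y)).sum := by
        have hmem : (y.choose y) ∈ N.map (fun x => x.choose y) :=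
          Multiset.mem_map_of_mem _ hy
        calc 1 = y.choose y := (Nat.choose_self y).symm
          _ ≤ _ := Multiset.single_le_sum (fun _ _ => Nat.zero_le _) _ hmem
      omega
    have hcount : ∀ (P : Multiset ℕ), (∀ y ∈ P, y ≤ m) →
        (P.map (fun x => x.choose m)).sum = P.count m := by
      intro P hP
      rw [← count_via_ite P m]
      congr 1
      apply Multiset.map_congr rfl
      intro x hx
      rcases eq_or_lt_of_le (hP x hx) with hxe | hxl
      · simp [hxe]
      · simp [Nat.choose_eq_zero_of_lt hxl, Nat.ne_of_lt hxl]
    have hcnt : M.count m = N.count m := by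
      rw [← hcount M hmax, ← hcount N hNle]; exact h m
    have hmN : m ∈ N := by
      rw [← Multiset.count_pos, ← hcnt]
      exact Multiset.count_pos.mpr hmM
    have hM' : m ::ₘ M.erase m = M := Multiset.cons_erase hmM
    have hN' : m ::ₘ N.erase m = N := Multiset.cons_erase hmN
    have hcard : (M.erase m).card = n := by
      have h2 := Multiset.card_erase_of_mem hmM
      simp [hc] at h2
      exact h2
    have hmom : ∀ j, ((M.erase m).map (fun x => x.choose j)).sum
        = ((N.erase m).map (fun x => x.choose j)).sum := by
      intro j
      have h1 := h j
      rw [← hM', ← hN'] at h1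
      simp only [Multiset.map_cons, Multiset.sum_cons] at h1
      omega
    have hMN := ih (M.erase m) (N.erase m) hcard hmom
    rw [← hM', ← hN', hMN]

open Classical in
noncomputable def cliquesIn {V : Type*} [DecidableEq V] (G : SimpleGraph V)
    (S : Finset V) (j : ℕ) : Finset (Finset V) :=
  (S.powersetCard j).filter (fun K => IsCliqueF G K)

lemma mem_cliquesIn {V : Type*} [DecidableEq V] {G : SimpleGraph V}
    {S K : Finset V} {j : ℕ} :
    K ∈ cliquesIn G S j ↔ K ⊆ S ∧ K.card = j ∧ IsCliqueF G K := by
  simp [cliquesIn, Finset.mem_filter, Finset.mem_powersetCard, and_assoc]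

noncomputable def isoFun {V : Type*} [DecidableEq V] {G : SimpleGraph V} {S T : Finset V}
    (e : G.induce (↑S : Set V) ≃g G.induce (↑T : Set V)) (v : V) : V :=
  if h : v ∈ S then ((e ⟨v, Finset.mem_coe.mpr h⟩ : (↑T : Set V)) : V) else v

lemma isoFun_mem {V : Type*} [DecidableEq V] {G : SimpleGraph V} {S T : Finset V}
    (e : G.induce (↑S : Set V) ≃g G.induce (↑T : Set V)) {v : V} (hv : v ∈ S) :
    isoFun e v ∈ T := by
  rw [isoFun, dif_pos hv]
  exact Finset.mem_coe.mp (e ⟨v, Finset.mem_coe.mpr hv⟩).2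

lemma isoFun_leftInv {V : Type*} [DecidableEq V] {G : SimpleGraph V} {S T : Finset V}
    (e : G.induce (↑S : Set V) ≃g G.induce (↑T : Set V)) {v : V} (hv : v ∈ S) :
    isoFun e.symm (isoFun e v) = v := by
  have hmem := isoFun_mem e hv
  rw [isoFun, dif_pos hmem]
  have h1 : (⟨isoFun e v, Finset.mem_coe.mpr hmem⟩ : (↑T : Set V)) = e ⟨v, Finset.mem_coe.mpr hv⟩ :=
    Subtype.ext (dif_pos hv)
  rw [h1]
  have h2 : e.symm (e ⟨v, Finset.mem_coe.mpr hv⟩) = ⟨v, Finset.mem_coe.mpr hv⟩ :=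
    e.symm_apply_apply _
  rw [h2]

lemma isoFun_adj {V : Type*} [DecidableEq V] {G : SimpleGraph V} {S T : Finset V}
    (e : G.induce (↑S : Set V) ≃g G.induce (↑T : Set V)) {v w : V}
    (hv : v ∈ S) (hw : w ∈ S) (h : G.Adj v w) :
    G.Adj (isoFun e v) (isoFun e w) := by
  rw [isoFun, dif_pos hv, isoFun, dif_pos hw]
  have : (G.induce (↑T : Set V)).Adj (e ⟨v, Finset.mem_coe.mpr hv⟩) (e ⟨w, Finset.mem_coe.mpr hw⟩) := by
    rw [e.map_adj_iff]
    exact h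
  exact this

lemma image_mem_cliquesIn {V : Type*} [DecidableEq V] {G : SimpleGraph V} {S T : Finset V}
    (e : G.induce (↑S : Set V) ≃g G.induce (↑T : Set V)) {j : ℕ} {K : Finset V}
    (hK : K ∈ cliquesIn G S j) : K.image (isoFun e) ∈ cliquesIn G T j := by
  obtain ⟨hKS, hcard, hclique⟩ := mem_cliquesIn.mp hK
  have hinj : Set.InjOn (isoFun e) ↑K := by
    intro a ha b hb hab
    have := congrArg (isoFun e.symm) hab
    rwa [isoFun_leftInv e (hKS ha), isoFun_leftInv e (hKS hb)] at this
  refine mem_cliquesIn.mpr ⟨?_, ?_, ?_⟩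
  · intro x hx
    obtain ⟨a, ha, rfl⟩ := Finset.mem_image.mp hx
    exact isoFun_mem e (hKS ha)
  · rw [Finset.card_image_of_injOn hinj, hcard]
  · intro x hx y hy hxy
    obtain ⟨a, ha, rfl⟩ := Finset.mem_image.mp hx
    obtain ⟨b, hb, rfl⟩ := Finset.mem_image.mp hy
    have hab : a ≠ b := fun h => hxy (by rw [h])
    exact isoFun_adj e (hKS ha) (hKS hb) (hclique a ha b hb hab)

lemma cliquesIn_card_eq {V : Type*} [DecidableEq V] {G : SimpleGraph V} {S T : Finset V}
    (e : G.induce (↑S : Set V) ≃g G.induce (↑T : Set V)) (j : ℕ) :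
    (cliquesIn G S j).card = (cliquesIn G T j).card := by
  have hleft : ∀ K ∈ cliquesIn G S j,
      (K.image (isoFun e)).image (isoFun e.symm) = K := by
    intro K hK
    obtain ⟨hKS, -, -⟩ := mem_cliquesIn.mp hK
    rw [Finset.image_image]
    rw [show K.image (isoFun e.symm ∘ isoFun e) = K.image id from
      Finset.image_congr (fun a ha => isoFun_leftInv e (hKS ha))]
    exact Finset.image_id
  have hright : ∀ K ∈ cliquesIn G T j,
      (K.image (isoFun e.symm)).image (isoFun e) = K := by
    intro K hK
    obtain ⟨hKT, -, -⟩ := mem_cliquesIn.mp hK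
    rw [Finset.image_image]
    rw [show K.image (isoFun e ∘ isoFun e.symm) = K.image id from
      Finset.image_congr (fun a ha => by
        have h2 := isoFun_leftInv e.symm (hKT ha)
        simpa using h2)]
    exact Finset.image_id
  exact Finset.card_bij' (fun K _ => K.image (isoFun e)) (fun K _ => K.image (isoFun e.symm))
    (fun K hK => image_mem_cliquesIn e hK) (fun K hK => image_mem_cliquesIn e.symm hK)
    (fun K hK => hleft K hK) (fun K hK => hright K hK)

lemma moment_formula {V : Type*} [Fintype V] [DecidableEq V] (G : SimpleGraph V)
    (MC : Finset (Finset V)) (hMC : ∀ C : Finset V, C ∈ MC ↔ IsMaxCliqueF G C)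
    (S : Finset V) (j r : ℕ)
    (hr : ∀ C : Finset V, IsCliqueF G C → C.card = j →
      {D : Finset V | IsMaxCliqueF G D ∧ C ⊆ D}.ncard = r) :
    ∑ C ∈ MC, ((C ∩ S).card).choose j = (cliquesIn G S j).card * r := by
  classical
  have step1 : ∀ C ∈ MC,
      ((C ∩ S).card).choose j = ((cliquesIn G S j).filter (fun K => K ⊆ C)).card := by
    intro C hC
    rw [← Finset.card_powersetCard]
    congr 1
    ext K
    simp only [Finset.mem_powersetCard, Finset.mem_filter, mem_cliquesIn]
    constructor
    · rintro ⟨hKC, hcard⟩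
      have hCc : IsCliqueF G C := ((hMC C).mp hC).1
      have hKC' : K ⊆ C := fun x hx => (Finset.mem_inter.mp (hKC hx)).1
      refine ⟨⟨fun x hx => (Finset.mem_inter.mp (hKC hx)).2, hcard, ?_⟩, hKC'⟩
      intro a ha b hb hab
      exact hCc a (hKC' ha) b (hKC' hb) hab
    · rintro ⟨⟨hKS, hcard, -⟩, hKC⟩
      exact ⟨fun x hx => Finset.mem_inter.mpr ⟨hKC hx, hKS hx⟩, hcard⟩
  rw [Finset.sum_congr rfl step1]
  have step2 : ∑ C ∈ MC, ((cliquesIn G S j).filter (fun K => K ⊆ C)).card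
      = ∑ K ∈ cliquesIn G S j, (MC.filter (fun C => K ⊆ C)).card := by
    simp only [Finset.card_filter]
    rw [Finset.sum_comm]
  rw [step2]
  have step3 : ∀ K ∈ cliquesIn G S j, (MC.filter (fun C => K ⊆ C)).card = r := by
    intro K hK
    obtain ⟨hKS, hcard, hclique⟩ := mem_cliquesIn.mp hK
    rw [← hr K hclique hcard, ← Set.ncard_coe_finset]
    congr 1
    ext D
    simp [hMC]
  rw [Finset.sum_congr rfl step3, Finset.sum_const, smul_eq_mul]

theorem stmt10 {V : Type*} [Fintype V] [DecidableEq V] (G : SimpleGraph V)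
    (htrans : ∀ a b : V, ∃ F : G ≃g G, F a = b)
    (hext : UniformCliqueExtension G)
    (hsame : ∃ k : ℕ, ∀ C : Finset V, IsMaxCliqueF G C → C.card = k)
    (MC : Finset (Finset V)) (hMC : ∀ C : Finset V, C ∈ MC ↔ IsMaxCliqueF G C)
    (ζ : ℕ → ℝ) (q : Finset V → ℝ)
    (hq : ∀ S : Finset V, q S = ∏ C ∈ MC, ζ ((C ∩ S).card)) :
    ∀ S T : Finset V,
      Nonempty (G.induce (↑S : Set V) ≃g G.induce (↑T : Set V)) → q S = q T := by
  intro S T hne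
  obtain ⟨e⟩ := hne
  rw [hq S, hq T]
  have key : MC.val.map (fun C => (C ∩ S).card) = MC.val.map (fun C => (C ∩ T).card) := by
    apply moments_eq (MC.val.map (fun C => (C ∩ S).card)).card _ _ rfl
    intro j
    rw [Multiset.map_map, Multiset.map_map]
    show ∑ C ∈ MC, ((C ∩ S).card).choose j = ∑ C ∈ MC, ((C ∩ T).card).choose j
    rcases Nat.eq_zero_or_pos j with rfl | hj
    · simp
    · obtain ⟨r, hr⟩ := hext j hj
      rw [moment_formula G MC hMC S j r hr, moment_formula G MC hMC T j r hr,
        cliquesIn_card_eq e j]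
  calc ∏ C ∈ MC, ζ ((C ∩ S).card)
      = ((MC.val.map (fun C => (C ∩ S).card)).map ζ).prod := by rw [Multiset.map_map]; rfl
    _ = ((MC.val.map (fun C => (C ∩ T).card)).map ζ).prod := by rw [key]
    _ = ∏ C ∈ MC, ζ ((C ∩ T).card) := by rw [Multiset.map_map]; rfl
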